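/- Let X_1, ..., X_n be random vectors in ℝ^d on a probability space such that the norm ‖X_i − E[X_i]‖ satisfies E[‖X_i − E[X_i]‖^k] ≤ σ_i^k k^k for every positive integer k, and such that the family X_1, ..., X_n is p-wise independent for an even positive integer p. Let σ² = Σ_{i=1}^n σ_i² and X = Σ_{i=1}^n X_i. Then E[‖X − E[X]‖^p] ≤ (3σ)^p · (2p)^p. -/

import Mathlib

open MeasureTheory ProbabilityTheory Finset

section Comb
open scoped Classical

variable {κ : Type*} [Fintype κ] [DecidableEq κ] {ι : Type*} [Fintype ι] [DecidableEq ι]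

/-- fiber count of a function on a finset -/
def pwCnt (S : Finset κ) (s : κ → ι) (i : ι) : ℕ := (S.filter fun k => s k = i).card

noncomputable def pwWeight (d₀ : ι) (σf : ι → ℝ) (S : Finset κ) (s : κ → ι) : ℝ :=
  if (∀ k, k ∉ S → s k = d₀) ∧ (∀ k ∈ S, 2 ≤ pwCnt S s (s k))
  then ∏ k ∈ S, (σf (s k) * pwCnt S s (s k)) else 0

lemma pwWeight_nonneg {d₀ : ι} {σf : ι → ℝ} (hσf : ∀ i, 0 ≤ σf i) (S : Finset κ) (s : κ → ι) :
    0 ≤ pwWeight d₀ σf S s := by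
  unfold pwWeight
  split
  · exact Finset.prod_nonneg fun k _ => mul_nonneg (hσf _) (Nat.cast_nonneg _)
  · exact le_rfl

lemma pow_self_le_factorial_mul_exp (c : ℕ) :
    (c : ℝ) ^ c ≤ (Nat.factorial c : ℝ) * Real.exp 1 ^ c := by
  induction c with
  | zero => simp
  | succ c ih =>
    rcases Nat.eq_zero_or_pos c with rfl | hc
    · simpa using Real.one_le_exp (by norm_num)
    have hc0 : (0:ℝ) < c := by exact_mod_cast hc
    have key : ((c:ℝ) + 1) ^ c ≤ (c:ℝ) ^ c * Real.exp 1 := by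
      have h1 : (c:ℝ) + 1 ≤ (c:ℝ) * Real.exp (1 / c) := by
        have := Real.add_one_le_exp (1 / (c:ℝ))
        calc (c:ℝ) + 1 = (c:ℝ) * (1 / c + 1) := by field_simp; ring
        _ ≤ (c:ℝ) * Real.exp (1 / c) := by
            exact mul_le_mul_of_nonneg_left (by linarith) (le_of_lt hc0)
      calc ((c:ℝ) + 1) ^ c ≤ ((c:ℝ) * Real.exp (1 / c)) ^ c := by
            exact pow_le_pow_left₀ (by positivity) h1 c
      _ = (c:ℝ) ^ c * Real.exp (1 / c) ^ c := by rw [mul_pow]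
      _ = (c:ℝ) ^ c * Real.exp 1 := by
          rw [← Real.exp_nat_mul]
          congr 1
          field_simp
    have hfac : ((c:ℝ)) ^ c ≤ (Nat.factorial c : ℝ) * Real.exp 1 ^ c := ih
    have hexp : (0:ℝ) < Real.exp 1 ^ c := by positivity
    calc ((c+1 :ℕ) : ℝ) ^ (c+1) = ((c:ℝ)+1) * ((c:ℝ)+1) ^ c := by
          push_cast; rw [pow_succ]; ring
    _ ≤ ((c:ℝ)+1) * ((c:ℝ) ^ c * Real.exp 1) := by
        refine mul_le_mul_of_nonneg_left key (by positivity)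
    _ ≤ ((c:ℝ)+1) * ((Nat.factorial c : ℝ) * Real.exp 1 ^ c * Real.exp 1) := by
        refine mul_le_mul_of_nonneg_left ?_ (by positivity)
        exact mul_le_mul_of_nonneg_right hfac (le_of_lt (Real.exp_pos 1))
    _ = (Nat.factorial (c+1) : ℝ) * Real.exp 1 ^ (c+1) := by
        rw [Nat.factorial_succ]
        push_cast
        ring

lemma sum_two_pow_le (m : ℕ) : ∑ c ∈ Icc 2 m, (2 : ℝ) ^ (m - c) ≤ 2 ^ m := by
  have key : ∀ m : ℕ, ∑ c ∈ Icc 2 m, (2 : ℝ) ^ (m - c) ≤ 2 ^ m - 1 := by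
    intro m
    induction m with
    | zero => simp
    | succ m ih =>
      rcases Nat.lt_or_ge m 1 with hm | hm
      · interval_cases m <;> simp
      · have hins : Icc 2 (m+1) = insert (m+1) (Icc 2 m) := by
          ext x
          simp only [Finset.mem_Icc, Finset.mem_insert]
          omega
        rw [hins, Finset.sum_insert (by simp)]
        have : ∑ c ∈ Icc 2 m, (2:ℝ) ^ (m + 1 - c) = 2 * ∑ c ∈ Icc 2 m, (2:ℝ) ^ (m - c) := by
          rw [Finset.mul_sum]
          refine Finset.sum_congr rfl fun c hc => ?_
          rw [Finset.mem_Icc] at hc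
          have : m + 1 - c = (m - c) + 1 := by omega
          rw [this, pow_succ]; ring
        rw [this]
        have h2 : (2:ℝ) ^ (m + 1 - (m+1)) = 1 := by simp
        rw [h2]
        have hpow : (2:ℝ) ^ (m+1) = 2 * 2 ^ m := by rw [pow_succ]; ring
        rw [hpow]
        nlinarith [ih]
  calc ∑ c ∈ Icc 2 m, (2 : ℝ) ^ (m - c) ≤ 2 ^ m - 1 := key m
  _ ≤ 2 ^ m := by linarith

lemma pwSum_rec (d₀ : ι) (σf : ι → ℝ) (hσf : ∀ i, 0 ≤ σf i) {S : Finset κ} {a : κ}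
    (ha : a ∈ S) :
    ∑ s : κ → ι, pwWeight d₀ σf S s ≤
      ∑ F ∈ S.powerset.filter (fun F => a ∈ F ∧ 2 ≤ F.card),
        ((∑ i, σf i ^ F.card) * (F.card : ℝ) ^ F.card) *
          ∑ s' : κ → ι, pwWeight d₀ σf (S \ F) s' := by
  classical
  set g : Finset κ → (κ → ι) → ℝ := pwWeight d₀ σf with hgdef
  set T : Finset (κ → ι) := univ.filter (fun s => g S s ≠ 0) with hT
  have hgood : ∀ s ∈ T, (∀ k, k ∉ S → s k = d₀) ∧ (∀ k ∈ S, 2 ≤ pwCnt S s (s k)) := by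
    intro s hs
    rw [hT, mem_filter] at hs
    by_contra hbad
    exact hs.2 (by rw [hgdef]; unfold pwWeight; rw [if_neg hbad])
  set Ψ : (κ → ι) → Finset κ × ι × (κ → ι) := fun s =>
    (S.filter (fun k => s k = s a), s a, fun k => if k ∈ S ∧ s k ≠ s a then s k else d₀) with hΨ
  set h : Finset κ × ι × (κ → ι) → ℝ := fun y =>
    if a ∈ y.1 ∧ 2 ≤ y.1.card ∧ y.1 ⊆ S then
      (σf y.2.1 * (y.1.card : ℝ)) ^ y.1.card * g (S \ y.1) y.2.2 else 0 with hh
  have hnonneg : ∀ y, 0 ≤ h y := by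
    intro y; rw [hh]; dsimp only; split
    · exact mul_nonneg (pow_nonneg (mul_nonneg (hσf _) (Nat.cast_nonneg _)) _)
        (pwWeight_nonneg hσf _ _)
    · exact le_rfl
  -- key pointwise identity on T
  have key : ∀ s ∈ T, g S s = h (Ψ s) := by
    intro s hs
    obtain ⟨hsupp, hcnt⟩ := hgood s hs
    set F : Finset κ := S.filter (fun k => s k = s a) with hF
    set t : κ → ι := fun k => if k ∈ S ∧ s k ≠ s a then s k else d₀ with ht
    have haF : a ∈ F := by rw [hF, mem_filter]; exact ⟨ha, rfl⟩
    have hFS : F ⊆ S := by rw [hF]; exact filter_subset _ _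
    have hcard : pwCnt S s (s a) = F.card := rfl
    have h2F : 2 ≤ F.card := by rw [← hcard]; exact hcnt a ha
    have hmemF : ∀ k, k ∈ F ↔ (k ∈ S ∧ s k = s a) := by
      intro k; rw [hF, mem_filter]
    have hteq : ∀ k ∈ S \ F, t k = s k := by
      intro k hk
      rw [mem_sdiff] at hk
      have : s k ≠ s a := fun hx => hk.2 ((hmemF k).2 ⟨hk.1, hx⟩)
      rw [ht]; simp only [if_pos (And.intro hk.1 this)]
    -- count transfer
    have hfilter_eq : ∀ j, j ≠ s a → (S \ F).filter (fun k' => s k' = j) =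
        S.filter (fun k' => s k' = j) := by
      intro j hj
      ext k'
      simp only [mem_filter, mem_sdiff]
      constructor
      · rintro ⟨⟨h1, _⟩, h2⟩; exact ⟨h1, h2⟩
      · rintro ⟨h1, h2⟩
        refine ⟨⟨h1, fun hk'F => ?_⟩, h2⟩
        exact hj (h2 ▸ ((hmemF k').1 hk'F).2)
    have hcnt_eq : ∀ k ∈ S \ F, pwCnt (S \ F) t (s k) = pwCnt S s (s k) := by
      intro k hk
      have hka : s k ≠ s a := by
        rw [mem_sdiff] at hk
        exact fun hx => hk.2 ((hmemF k).2 ⟨hk.1, hx⟩)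
      unfold pwCnt
      rw [show ((S \ F).filter fun k' => t k' = s k) = ((S \ F).filter fun k' => s k' = s k)
          from filter_congr (fun k' hk' => by rw [hteq k' hk'])]
      rw [hfilter_eq _ hka]
    -- goodness of t on S \ F
    have htgood : (∀ k, k ∉ S \ F → t k = d₀) ∧ (∀ k ∈ S \ F, 2 ≤ pwCnt (S \ F) t (t k)) := by
      constructor
      · intro k hk
        rw [ht]
        by_cases h1 : k ∈ S ∧ s k ≠ s a
        · exfalso
          exact hk (mem_sdiff.2 ⟨h1.1, fun hkF => h1.2 ((hmemF k).1 hkF).2⟩)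
        · simp only [if_neg h1]
      · intro k hk
        rw [hteq k hk, hcnt_eq k hk]
        exact hcnt k (mem_sdiff.1 hk).1
    -- factorization of the weight
    have hgS : g S s = ∏ k ∈ S, (σf (s k) * (pwCnt S s (s k) : ℝ)) := by
      rw [hgdef]; unfold pwWeight; rw [if_pos ⟨hsupp, hcnt⟩]
    have hgSF : g (S \ F) t = ∏ k ∈ S \ F, (σf (t k) * (pwCnt (S \ F) t (t k) : ℝ)) := by
      rw [hgdef]; unfold pwWeight; rw [if_pos htgood]
    have hsplit : (∏ k ∈ S \ F, (σf (s k) * (pwCnt S s (s k) : ℝ))) *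
        ∏ k ∈ F, (σf (s k) * (pwCnt S s (s k) : ℝ))
        = ∏ k ∈ S, (σf (s k) * (pwCnt S s (s k) : ℝ)) := Finset.prod_sdiff hFS
    have hprodF : ∏ k ∈ F, (σf (s k) * (pwCnt S s (s k) : ℝ))
        = (σf (s a) * (F.card : ℝ)) ^ F.card := by
      rw [← Finset.prod_const]
      refine Finset.prod_congr rfl fun k hk => ?_
      have : s k = s a := ((hmemF k).1 hk).2
      rw [this, hcard]
    have hprodSF : ∏ k ∈ S \ F, (σf (s k) * (pwCnt S s (s k) : ℝ))
        = ∏ k ∈ S \ F, (σf (t k) * (pwCnt (S \ F) t (t k) : ℝ)) := by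
      refine Finset.prod_congr rfl fun k hk => ?_
      rw [hteq k hk, hcnt_eq k hk]
    have hΨs : Ψ s = (F, s a, t) := rfl
    rw [hΨs, hh]
    dsimp only
    rw [if_pos ⟨haF, h2F, hFS⟩]
    rw [hgS, ← hsplit, hprodF, hprodSF, hgSF]
    ring
  -- injectivity of Ψ on T
  have hinj : Set.InjOn Ψ T := by
    intro s₁ hs₁ s₂ hs₂ heq
    have h1 := hgood s₁ (by simpa using hs₁)
    have h2 := hgood s₂ (by simpa using hs₂)
    have hF : S.filter (fun k => s₁ k = s₁ a) = S.filter (fun k => s₂ k = s₂ a) :=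
      congrArg Prod.fst heq
    have hia : s₁ a = s₂ a := congrArg (fun y => y.2.1) heq
    have hrest : (fun k => if k ∈ S ∧ s₁ k ≠ s₁ a then s₁ k else d₀)
        = (fun k => if k ∈ S ∧ s₂ k ≠ s₂ a then s₂ k else d₀) := congrArg (fun y => y.2.2) heq
    funext k
    by_cases hkS : k ∈ S
    · by_cases hk1 : s₁ k = s₁ a
      · have hkF : k ∈ S.filter (fun k => s₂ k = s₂ a) := by
          rw [← hF, mem_filter]; exact ⟨hkS, hk1⟩
        rw [mem_filter] at hkF
        rw [hk1, hia, hkF.2]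
      · have hk2 : ¬ s₂ k = s₂ a := by
          intro hx
          have : k ∈ S.filter (fun k => s₁ k = s₁ a) := by
            rw [hF, mem_filter]; exact ⟨hkS, hx⟩
          rw [mem_filter] at this
          exact hk1 this.2
        have := congrFun hrest k
        simp only [if_pos (And.intro hkS hk1), if_pos (And.intro hkS hk2)] at this
        exact this
    · rw [h1.1 k hkS, h2.1 k hkS]
  -- assemble
  have step1 : ∑ s : κ → ι, g S s = ∑ s ∈ T, g S s := by
    rw [hT]
    exact (Finset.sum_filter_ne_zero _).symm
  have step2 : ∑ s ∈ T, g S s = ∑ y ∈ T.image Ψ, h y := by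
    rw [Finset.sum_image (fun x hx y hy hxy => hinj hx hy hxy)]
    exact Finset.sum_congr rfl key
  have step3 : ∑ y ∈ T.image Ψ, h y ≤ ∑ y : Finset κ × ι × (κ → ι), h y :=
    Finset.sum_le_sum_of_subset_of_nonneg (subset_univ _) (fun y _ _ => hnonneg y)
  have step4 : ∑ y : Finset κ × ι × (κ → ι), h y =
      ∑ F ∈ S.powerset.filter (fun F => a ∈ F ∧ 2 ≤ F.card),
        ((∑ i, σf i ^ F.card) * (F.card : ℝ) ^ F.card) * ∑ s' : κ → ι, g (S \ F) s' := by
    rw [Fintype.sum_prod_type]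
    have hterm : ∀ F : Finset κ,
        (∑ y : ι × (κ → ι), h (F, y)) =
        if a ∈ F ∧ 2 ≤ F.card ∧ F ⊆ S then
          ((∑ i, σf i ^ F.card) * (F.card : ℝ) ^ F.card) * ∑ s' : κ → ι, g (S \ F) s'
        else 0 := by
      intro F
      by_cases hP : a ∈ F ∧ 2 ≤ F.card ∧ F ⊆ S
      · rw [if_pos hP, Fintype.sum_prod_type]
        have : ∀ (i : ι) (s' : κ → ι), h (F, i, s') =
            (σf i * (F.card : ℝ)) ^ F.card * g (S \ F) s' := by
          intro i s'; rw [hh]; dsimp only; rw [if_pos hP]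
        simp only [this]
        calc ∑ i : ι, ∑ s' : κ → ι, (σf i * (F.card:ℝ)) ^ F.card * g (S \ F) s'
            = ∑ i : ι, (σf i * (F.card:ℝ)) ^ F.card * ∑ s' : κ → ι, g (S \ F) s' := by
              refine Finset.sum_congr rfl fun i _ => ?_
              rw [← Finset.mul_sum]
        _ = (∑ i : ι, (σf i * (F.card:ℝ)) ^ F.card) * ∑ s' : κ → ι, g (S \ F) s' := by
              rw [Finset.sum_mul]
        _ = ((∑ i, σf i ^ F.card) * (F.card : ℝ) ^ F.card) * ∑ s' : κ → ι, g (S \ F) s' := by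
              congr 1
              simp_rw [mul_pow]
              rw [← Finset.sum_mul]
      · rw [if_neg hP]
        apply Finset.sum_eq_zero
        intro y _
        rw [hh]; dsimp only; rw [if_neg hP]
    simp only [hterm]
    rw [← Finset.sum_filter]
    refine Finset.sum_congr ?_ fun F _ => rfl
    ext F
    simp only [mem_filter, mem_univ, true_and, mem_powerset]
    tauto
  calc ∑ s : κ → ι, g S s = ∑ y ∈ T.image Ψ, h y := by rw [step1, step2]
  _ ≤ ∑ y : Finset κ × ι × (κ → ι), h y := step3
  _ = _ := step4

lemma pwSum_le (d₀ : ι) (σf : ι → ℝ) (hσf : ∀ i, 0 ≤ σf i) (σt : ℝ) (hσt : 0 ≤ σt)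
    (hsum : ∀ c : ℕ, 2 ≤ c → ∑ i, σf i ^ c ≤ σt ^ c) (S : Finset κ) :
    ∑ s : κ → ι, pwWeight d₀ σf S s ≤
      (2 * Real.exp 1 * σt) ^ S.card * (S.card : ℝ) ^ S.card := by
  classical
  set e : ℝ := Real.exp 1 with he
  have he1 : (1:ℝ) ≤ e := Real.one_le_exp (by norm_num)
  have he0 : (0:ℝ) ≤ e := by linarith
  have hAnonneg : ∀ S' : Finset κ, 0 ≤ ∑ s : κ → ι, pwWeight d₀ σf S' s :=
    fun S' => Finset.sum_nonneg fun s _ => pwWeight_nonneg hσf _ _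
  have H : ∀ (m : ℕ) (S : Finset κ), S.card = m →
      ∑ s : κ → ι, pwWeight d₀ σf S s ≤ (2 * e * σt) ^ m * (m : ℝ) ^ m := by
    intro m
    induction m using Nat.strong_induction_on with
    | _ m ih =>
      intro S hSm
      rcases Nat.eq_zero_or_pos m with rfl | hm
      · have hS : S = ∅ := Finset.card_eq_zero.1 hSm
        subst hS
        have hval : ∀ s : κ → ι, pwWeight d₀ σf (∅ : Finset κ) s =
            if s = (fun _ => d₀) then 1 else 0 := by
          intro s
          unfold pwWeight
          rw [Finset.prod_empty]
          by_cases hs : s = (fun _ => d₀)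
          · rw [if_pos hs, if_pos ⟨fun k _ => by rw [hs], fun k hk => absurd hk (Finset.notMem_empty k)⟩]
          · rw [if_neg hs, if_neg]
            rintro ⟨h1, _⟩
            exact hs (funext fun k => h1 k (Finset.notMem_empty k))
        rw [Finset.sum_congr rfl fun s _ => hval s]
        simp
      · have hSne : S.Nonempty := Finset.card_pos.1 (hSm ▸ hm)
        obtain ⟨a, ha⟩ := hSne
        refine le_trans (pwSum_rec d₀ σf hσf ha) ?_
        set E : ℝ := e ^ m * σt ^ m * (m:ℝ) ^ m with hE
        have hEnn : 0 ≤ E := by positivity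
        set W : ℕ → ℝ := fun c =>
          (σt ^ c * (c:ℝ) ^ c) * ((2 * e * σt) ^ (m - c) * ((m - c : ℕ) : ℝ) ^ (m - c)) with hW
        have hWnn : ∀ c, 0 ≤ W c := by intro c; rw [hW]; positivity
        -- bound each term by W F.card
        have hstep1 : ∑ F ∈ S.powerset.filter (fun F => a ∈ F ∧ 2 ≤ F.card),
            ((∑ i, σf i ^ F.card) * (F.card : ℝ) ^ F.card) *
              ∑ s' : κ → ι, pwWeight d₀ σf (S \ F) s' ≤
            ∑ F ∈ S.powerset.filter (fun F => a ∈ F ∧ 2 ≤ F.card), W F.card := by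
          refine Finset.sum_le_sum fun F hF => ?_
          rw [Finset.mem_filter, Finset.mem_powerset] at hF
          obtain ⟨hFS, -, h2c⟩ := hF
          have hcm : F.card ≤ m := hSm ▸ Finset.card_le_card hFS
          have hsd : (S \ F).card = m - F.card := by rw [Finset.card_sdiff_of_subset hFS, hSm]
          have hlt : m - F.card < m := by omega
          have hIH := ih _ hlt (S \ F) hsd
          rw [hW]
          refine mul_le_mul ?_ ?_ (hAnonneg _) (by positivity)
          · exact mul_le_mul_of_nonneg_right (hsum _ h2c) (by positivity)
          · exact hIH
        refine le_trans hstep1 ?_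
        -- group by cardinality
        have hsub : S.powerset.filter (fun F => a ∈ F ∧ 2 ≤ F.card) ⊆
            (Finset.Icc 2 m).biUnion (fun c => S.powersetCard c) := by
          intro F hF
          rw [Finset.mem_filter, Finset.mem_powerset] at hF
          rw [Finset.mem_biUnion]
          exact ⟨F.card, Finset.mem_Icc.2 ⟨hF.2.2, hSm ▸ Finset.card_le_card hF.1⟩,
            Finset.mem_powersetCard.2 ⟨hF.1, rfl⟩⟩
        have hstep2 : ∑ F ∈ S.powerset.filter (fun F => a ∈ F ∧ 2 ≤ F.card), W F.card ≤
            ∑ F ∈ (Finset.Icc 2 m).biUnion (fun c => S.powersetCard c), W F.card :=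
          Finset.sum_le_sum_of_subset_of_nonneg hsub (fun F _ _ => hWnn _)
        refine le_trans hstep2 ?_
        have hdisj : ∀ c₁ ∈ Finset.Icc 2 m, ∀ c₂ ∈ Finset.Icc 2 m, c₁ ≠ c₂ →
            Disjoint (S.powersetCard c₁) (S.powersetCard c₂) := by
          intro c₁ _ c₂ _ hne
          rw [Finset.disjoint_left]
          intro F h1 h2
          rw [Finset.mem_powersetCard] at h1 h2
          exact hne (h1.2 ▸ h2.2)
        rw [Finset.sum_biUnion hdisj]
        have hstep3 : ∀ c ∈ Finset.Icc 2 m, ∑ F ∈ S.powersetCard c, W F.card =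
            (m.choose c : ℝ) * W c := by
          intro c hc
          rw [Finset.sum_congr rfl (fun F hF => by
            rw [(Finset.mem_powersetCard.1 hF).2]), Finset.sum_const,
            Finset.card_powersetCard, hSm, nsmul_eq_mul]
        rw [Finset.sum_congr rfl hstep3]
        -- numeric bound
        have hterm : ∀ c ∈ Finset.Icc 2 m, (m.choose c : ℝ) * W c ≤ E * 2 ^ (m - c) := by
          intro c hc
          rw [Finset.mem_Icc] at hc
          obtain ⟨h2c, hcm⟩ := hc
          have hfac : (m.choose c : ℝ) * (c:ℝ)^c ≤ (m:ℝ)^c * e^c := by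
            calc (m.choose c : ℝ) * (c:ℝ)^c ≤ (m.choose c : ℝ) * ((Nat.factorial c : ℝ) * e^c) := by
                  refine mul_le_mul_of_nonneg_left ?_ (Nat.cast_nonneg _)
                  rw [he]; exact pow_self_le_factorial_mul_exp c
            _ = ((Nat.factorial c : ℝ) * (m.choose c : ℝ)) * e^c := by ring
            _ ≤ (m:ℝ)^c * e^c := by
                  refine mul_le_mul_of_nonneg_right ?_ (by positivity)
                  have h1 : Nat.factorial c * m.choose c ≤ m ^ c := by
                    rw [← Nat.descFactorial_eq_factorial_mul_choose]
                    exact Nat.descFactorial_le_pow m c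
                  exact_mod_cast h1
          have hmc : ((m - c : ℕ) : ℝ)^(m-c) ≤ (m:ℝ)^(m-c) :=
            pow_le_pow_left₀ (Nat.cast_nonneg _) (Nat.cast_le.2 (Nat.sub_le m c)) _
          have hsplit : (2 * e * σt) ^ (m - c) = 2^(m-c) * e^(m-c) * σt^(m-c) := by
            rw [mul_pow, mul_pow]
          calc (m.choose c : ℝ) * W c
              = ((m.choose c : ℝ) * (c:ℝ)^c) * σt^c *
                ((2 * e * σt) ^ (m - c) * ((m - c : ℕ) : ℝ) ^ (m - c)) := by rw [hW]; ring
          _ ≤ ((m:ℝ)^c * e^c) * σt^c * ((2 * e * σt) ^ (m - c) * (m:ℝ)^(m-c)) := by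
              refine mul_le_mul ?_ ?_ (by positivity) (by positivity)
              · exact mul_le_mul_of_nonneg_right hfac (by positivity)
              · exact mul_le_mul_of_nonneg_left hmc (by positivity)
          _ = ((m:ℝ)^c * (m:ℝ)^(m-c)) * (e^c * e^(m-c)) * (σt^c * σt^(m-c)) * 2^(m-c) := by
              rw [hsplit]; ring
          _ = E * 2 ^ (m - c) := by
              rw [← pow_add, ← pow_add, ← pow_add, Nat.add_sub_cancel' hcm, hE]
              ring
        refine le_trans (Finset.sum_le_sum hterm) ?_
        rw [← Finset.mul_sum]
        calc E * ∑ c ∈ Finset.Icc 2 m, (2:ℝ) ^ (m - c) ≤ E * 2 ^ m :=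
              mul_le_mul_of_nonneg_left (sum_two_pow_le m) hEnn
        _ = (2 * e * σt) ^ m * (m : ℝ) ^ m := by
              rw [hE, mul_pow, mul_pow]; ring
  exact H S.card S rfl

end Comb

section Factor

variable {Ω : Type*} [MeasurableSpace Ω] {μ : Measure Ω} [IsProbabilityMeasure μ]
variable {E : Type*} [mE : MeasurableSpace E] {ι : Type*} [DecidableEq ι]

lemma integral_prod_of_indep {X : ι → Ω → E} {s₀ : Finset ι}
    (hmeas : ∀ i, Measurable (X i))
    (hind : iIndepFun (m := fun _ : s₀ => mE) (fun i : s₀ => X i.1) μ)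
    (ψ : ι → E → ℝ) (hψ : ∀ i, Measurable (ψ i)) :
    ∫ ω, ∏ i ∈ s₀, ψ i (X i ω) ∂μ = ∏ i ∈ s₀, ∫ ω, ψ i (X i ω) ∂μ := by
  classical
  set F : s₀ → Ω → ℝ := fun j => fun ω => ψ j.1 (X j.1 ω) with hF
  have hFmeas : ∀ j : s₀, Measurable (F j) := fun j => (hψ _).comp (hmeas _)
  have hFind : iIndepFun (m := fun _ : s₀ => (inferInstance : MeasurableSpace ℝ)) F μ :=
    hind.comp (fun j => ψ j.1) (fun j => hψ _)
  have key : ∀ T : Finset s₀, ∫ ω, ∏ j ∈ T, F j ω ∂μ = ∏ j ∈ T, ∫ ω, F j ω ∂μ := by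
    intro T
    induction T using Finset.induction_on with
    | empty => simp
    | @insert j T hj ih =>
      have hIndep : IndepFun (∏ k ∈ T, F k) (F j) μ :=
        hFind.indepFun_finsetProd_of_notMem hFmeas hj
      have hTmeas : Measurable (∏ k ∈ T, F k) := by
        rw [show (∏ k ∈ T, F k) = fun ω => ∏ k ∈ T, F k ω from funext fun ω =>
          Finset.prod_apply ω T F]
        exact Finset.measurable_prod T fun k _ => hFmeas k
      have := hIndep.integral_fun_mul_eq_mul_integral hTmeas.aestronglyMeasurable (hFmeas j).aestronglyMeasurable
      calc ∫ ω, ∏ k ∈ insert j T, F k ω ∂μ = ∫ ω, (∏ k ∈ T, F k) ω * F j ω ∂μ := by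
            refine integral_congr_ae (Filter.Eventually.of_forall fun ω => ?_)
            dsimp only
            rw [Finset.prod_insert hj, Finset.prod_apply]
            ring
      _ = (∫ ω, (∏ k ∈ T, F k) ω ∂μ) * ∫ ω, F j ω ∂μ := this
      _ = (∫ ω, ∏ k ∈ T, F k ω ∂μ) * ∫ ω, F j ω ∂μ := by
            congr 1
            exact integral_congr_ae (Filter.Eventually.of_forall fun ω => by
              dsimp only
              rw [Finset.prod_apply])
      _ = ∏ k ∈ insert j T, ∫ ω, F k ω ∂μ := by
            rw [ih, Finset.prod_insert hj]
            ring
  have h1 : ∫ ω, ∏ i ∈ s₀, ψ i (X i ω) ∂μ = ∫ ω, ∏ j : s₀, F j ω ∂μ := by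
    refine integral_congr_ae (Filter.Eventually.of_forall fun ω => ?_)
    dsimp only
    rw [Finset.univ_eq_attach, hF]
    exact (Finset.prod_attach s₀ (fun i => ψ i (X i ω))).symm
  have h2 : ∏ i ∈ s₀, ∫ ω, ψ i (X i ω) ∂μ = ∏ j : s₀, ∫ ω, F j ω ∂μ := by
    rw [Finset.univ_eq_attach, hF]
    exact (Finset.prod_attach s₀ (fun i => ∫ ω, ψ i (X i ω) ∂μ)).symm
  rw [h1, h2, key Finset.univ]

end Factor

open scoped RealInnerProductSpace

set_option maxHeartbeats 2000000 in
/-- Corollary `cor:pwiseconcentration:vector`, moment bound: if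
`X₁, …, Xₙ` are random vectors in `ℝ^d` with `E[‖Xᵢ − E Xᵢ‖^k] ≤ σᵢ^k k^k` for all
`k ≥ 1`, and the family is `p`-wise independent for an even positive integer `p`, then
with `σ² = ∑ᵢ σᵢ²` and `X = ∑ᵢ Xᵢ` we have `E[‖X − E X‖^p] ≤ (3σ)^p (2p)^p`. -/
theorem pwise_independent_vector_moment_bound
    {Ω : Type*} [MeasurableSpace Ω] (μ : Measure Ω) [IsProbabilityMeasure μ]
    (n d p : ℕ) (hp : 1 ≤ p) (hpeven : Even p)
    (X : Fin n → Ω → EuclideanSpace ℝ (Fin d)) (σ : Fin n → ℝ)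
    (hσ : ∀ i, 0 ≤ σ i)
    (hmeas : ∀ i, Measurable (X i))
    (hint : ∀ (i : Fin n) (k : ℕ), 1 ≤ k →
      Integrable (fun ω => ‖X i ω - ∫ x, X i x ∂μ‖ ^ k) μ)
    (hsub : ∀ (i : Fin n) (k : ℕ), 1 ≤ k →
      (∫ ω, ‖X i ω - ∫ x, X i x ∂μ‖ ^ k ∂μ) ≤ σ i ^ k * (k : ℝ) ^ k)
    (hindep : ∀ s : Finset (Fin n), s.card ≤ p →
      iIndepFun (m := fun _ : s => (inferInstance : MeasurableSpace (EuclideanSpace ℝ (Fin d))))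
        (fun i : s => X i.1) μ) :
    (∫ ω, ‖(∑ i, X i ω) - ∫ x, ∑ i, X i x ∂μ‖ ^ p ∂μ) ≤
      (3 * Real.sqrt (∑ i, σ i ^ 2)) ^ p * (2 * (p : ℝ)) ^ p := by
  classical
  have hp0 : p ≠ 0 := by omega
  rcases Nat.eq_zero_or_pos n with rfl | hn
  · simp only [Finset.univ_eq_empty, Finset.sum_empty, integral_zero, sub_zero, norm_zero,
      zero_pow hp0, Real.sqrt_zero, mul_zero, integral_zero]
    positivity
  obtain ⟨q, hq⟩ := hpeven
  have hq1 : 1 ≤ q := by omega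
  set d₀ : Fin n := ⟨0, hn⟩ with hd₀
  set Y : Fin n → Ω → EuclideanSpace ℝ (Fin d) := fun i ω => X i ω - ∫ x, X i x ∂μ with hY
  have hYdef : ∀ i ω, X i ω - ∫ x, X i x ∂μ = Y i ω := fun i ω => by rw [hY]
  have hYmeas : ∀ i, Measurable (Y i) := fun i => by
    rw [hY]; exact (hmeas i).sub measurable_const
  have hYpow : ∀ (i : Fin n) (k : ℕ), 1 ≤ k → Integrable (fun ω => ‖Y i ω‖ ^ k) μ := by
    intro i k hk
    simpa only [hY] using hint i k hk
  have hYsub : ∀ (i : Fin n) (k : ℕ), 1 ≤ k →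
      (∫ ω, ‖Y i ω‖ ^ k ∂μ) ≤ σ i ^ k * (k : ℝ) ^ k := by
    intro i k hk
    simpa only [hY] using hsub i k hk
  have hYint : ∀ i, Integrable (Y i) μ := by
    intro i
    have h1 : Integrable (fun ω => ‖Y i ω‖) μ := by
      simpa only [pow_one] using hYpow i 1 le_rfl
    exact (integrable_norm_iff (hYmeas i).aestronglyMeasurable).1 h1
  have hXint : ∀ i, Integrable (X i) μ := by
    intro i
    have := (hYint i).add (integrable_const (∫ x, X i x ∂μ))
    refine this.congr (Filter.Eventually.of_forall fun ω => ?_)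
    simp [hY]
  have hYzero : ∀ i, ∫ ω, Y i ω ∂μ = 0 := by
    intro i
    rw [hY]
    rw [integral_sub (hXint i) (integrable_const _)]
    simp [integral_const, measure_univ]
  -- coordinates
  have hcoordmeas : ∀ (i : Fin n) (j : Fin d), Measurable (fun ω => Y i ω j) := by
    intro i j
    exact ((EuclideanSpace.proj j (𝕜 := ℝ)).measurable).comp (hYmeas i)
  have hcoordzero : ∀ (i : Fin n) (j : Fin d), ∫ ω, Y i ω j ∂μ = 0 := by
    intro i j
    have := (EuclideanSpace.proj j (𝕜 := ℝ)).integral_comp_comm (hYint i)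
    rw [hYzero i] at this
    simpa using this
  have habs : ∀ (v : EuclideanSpace ℝ (Fin d)) (j : Fin d), |v j| ≤ ‖v‖ := by
    intro v j
    rw [EuclideanSpace.norm_eq, ← Real.sqrt_sq_eq_abs]
    apply Real.sqrt_le_sqrt
    have := Finset.single_le_sum (f := fun i => ‖v i‖ ^ 2)
      (fun i _ => by positivity) (Finset.mem_univ j)
    simpa [Real.norm_eq_abs, sq_abs] using this
  -- dominating function
  set G : Ω → ℝ := fun ω => (∑ i, ‖Y i ω‖) ^ p with hG
  have hGdef : ∀ ω, G ω = (∑ i, ‖Y i ω‖) ^ p := fun ω => by rw [hG]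
  have hGmeas : Measurable G := by
    rw [hG]
    exact (Finset.measurable_sum univ fun i _ => (hYmeas i).norm).pow_const p
  have hGnonneg : ∀ ω, 0 ≤ G ω := fun ω => by rw [hGdef]; positivity
  have hGint : Integrable G μ := by
    have hbound : ∀ ω, G ω ≤ (n : ℝ) ^ (p - 1) * ∑ i, ‖Y i ω‖ ^ p := by
      intro ω
      have h := pow_sum_div_card_le_sum_pow (s := (univ : Finset (Fin n)))
        (f := fun i => ‖Y i ω‖) (fun i _ => norm_nonneg _) (p - 1)
      have hp1 : p - 1 + 1 = p := by omega
      rw [hp1] at h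
      have hcard : ((univ : Finset (Fin n)).card : ℝ) = (n : ℝ) := by
        rw [Finset.card_univ, Fintype.card_fin]
      rw [hcard] at h
      have hnpos : (0 : ℝ) < (n : ℝ) ^ (p - 1) := by positivity
      rw [div_le_iff₀ hnpos] at h
      rw [hGdef]
      calc (∑ i, ‖Y i ω‖) ^ p ≤ (∑ i, ‖Y i ω‖ ^ p) * (n : ℝ) ^ (p - 1) := h
      _ = (n : ℝ) ^ (p - 1) * ∑ i, ‖Y i ω‖ ^ p := by ring
    refine Integrable.mono'
      ((integrable_finset_sum univ fun i _ => hYpow i p hp).const_mul ((n : ℝ) ^ (p - 1)))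
      hGmeas.aestronglyMeasurable (Filter.Eventually.of_forall fun ω => ?_)
    rw [Real.norm_eq_abs, abs_of_nonneg (hGnonneg ω)]
    exact hbound ω
  have hdom : ∀ f : Ω → ℝ, Measurable f → (∀ ω, |f ω| ≤ G ω) → Integrable f μ := by
    intro f hf hb
    exact hGint.mono' hf.aestronglyMeasurable
      (Filter.Eventually.of_forall fun ω => by rw [Real.norm_eq_abs]; exact hb ω)
  -- sigma total
  set σt : ℝ := Real.sqrt (∑ i, σ i ^ 2) with hσtdef
  have hσt0 : 0 ≤ σt := Real.sqrt_nonneg _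
  have hσtsq : σt ^ 2 = ∑ i, σ i ^ 2 := Real.sq_sqrt (Finset.sum_nonneg fun i _ => sq_nonneg _)
  have hσle : ∀ i, σ i ≤ σt := by
    intro i
    rw [show σ i = Real.sqrt (σ i ^ 2) from (Real.sqrt_sq (hσ i)).symm, hσtdef]
    exact Real.sqrt_le_sqrt (Finset.single_le_sum (fun j _ => sq_nonneg (σ j)) (Finset.mem_univ i))
  have hsum : ∀ c : ℕ, 2 ≤ c → ∑ i, σ i ^ c ≤ σt ^ c := by
    intro c hc
    obtain ⟨j, rfl⟩ : ∃ j, c = 2 + j := ⟨c - 2, by omega⟩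
    calc ∑ i, σ i ^ (2 + j) = ∑ i, σ i ^ 2 * σ i ^ j := by
          exact Finset.sum_congr rfl fun i _ => pow_add _ _ _
    _ ≤ ∑ i, σ i ^ 2 * σt ^ j := Finset.sum_le_sum fun i _ =>
          mul_le_mul_of_nonneg_left (pow_le_pow_left₀ (hσ i) (hσle i) j) (sq_nonneg _)
    _ = σt ^ 2 * σt ^ j := by rw [← Finset.sum_mul, hσtsq]
    _ = σt ^ (2 + j) := (pow_add _ _ _).symm
  -- the index type for slots
  have hcardκ : Fintype.card (Fin q × Bool) = p := by
    simp only [Fintype.card_prod, Fintype.card_bool, Fintype.card_fin]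
    omega
  -- term functions
  set P : (Fin q → Fin n × Fin n) → Ω → ℝ :=
    fun t ω => ∏ k : Fin q, ⟪Y (t k).1 ω, Y (t k).2 ω⟫ with hP
  have hPdef : ∀ t ω, P t ω = ∏ k : Fin q, ⟪Y (t k).1 ω, Y (t k).2 ω⟫ :=
    fun t ω => by rw [hP]
  have hPmeas : ∀ t, Measurable (P t) := by
    intro t
    rw [hP]
    exact Finset.measurable_prod univ fun k _ => (hYmeas _).inner (hYmeas _)
  have hnormG : ∀ (v : (Fin q × Bool) → Fin n) (ω : Ω),
      (∏ kb : Fin q × Bool, ‖Y (v kb) ω‖) ≤ G ω := by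
    intro v ω
    rw [hGdef]
    calc ∏ kb : Fin q × Bool, ‖Y (v kb) ω‖
        ≤ ∏ _kb : Fin q × Bool, (∑ i, ‖Y i ω‖) := by
          refine Finset.prod_le_prod (fun kb _ => norm_nonneg _) (fun kb _ => ?_)
          exact Finset.single_le_sum (f := fun i => ‖Y i ω‖)
            (fun i _ => norm_nonneg _) (Finset.mem_univ (v kb))
    _ = (∑ i, ‖Y i ω‖) ^ p := by
        rw [Finset.prod_const, Finset.card_univ, hcardκ]
  have hPabs : ∀ t ω, |P t ω| ≤
      ∏ kb : Fin q × Bool, ‖Y ((fun kb : Fin q × Bool =>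
        cond kb.2 (t kb.1).1 (t kb.1).2) kb) ω‖ := by
    intro t ω
    rw [hPdef, Finset.abs_prod]
    calc ∏ k : Fin q, |⟪Y (t k).1 ω, Y (t k).2 ω⟫|
        ≤ ∏ k : Fin q, (‖Y (t k).1 ω‖ * ‖Y (t k).2 ω‖) :=
          Finset.prod_le_prod (fun k _ => abs_nonneg _) (fun k _ => abs_real_inner_le_norm _ _)
    _ = _ := by
        rw [Fintype.prod_prod_type]
        exact (Finset.prod_congr rfl fun k _ => by
          rw [Fintype.prod_bool]
          simp).symm
  have hPint : ∀ t, Integrable (P t) μ := by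
    intro t
    exact hdom _ (hPmeas t) (fun ω => le_trans (hPabs t ω) (hnormG _ ω))
  -- pointwise expansion
  have hexp : ∀ ω, ‖∑ i, Y i ω‖ ^ p = ∑ t : Fin q → Fin n × Fin n, P t ω := by
    intro ω
    have h1 : ‖∑ i, Y i ω‖ ^ p = (⟪∑ i, Y i ω, ∑ i, Y i ω⟫) ^ q := by
      rw [real_inner_self_eq_norm_sq, ← pow_mul]
      congr 1
      omega
    have h2 : ⟪∑ i, Y i ω, ∑ i, Y i ω⟫ = ∑ z : Fin n × Fin n, ⟪Y z.1 ω, Y z.2 ω⟫ := by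
      rw [sum_inner, Fintype.sum_prod_type]
      exact Finset.sum_congr rfl fun i _ => inner_sum _ _ _
    rw [h1, h2]
    calc (∑ z : Fin n × Fin n, ⟪Y z.1 ω, Y z.2 ω⟫) ^ q
        = ∏ _k : Fin q, (∑ z : Fin n × Fin n, ⟪Y z.1 ω, Y z.2 ω⟫) := by
          rw [Finset.prod_const, Finset.card_univ, Fintype.card_fin]
    _ = ∑ t ∈ Fintype.piFinset (fun _ : Fin q => (univ : Finset (Fin n × Fin n))),
          ∏ k : Fin q, ⟪Y (t k).1 ω, Y (t k).2 ω⟫ := Finset.prod_univ_sum _ _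
    _ = ∑ t : Fin q → Fin n × Fin n, P t ω := by
          rw [Fintype.piFinset_univ]
  -- THE PER-TERM BOUND
  have hterm : ∀ t : Fin q → Fin n × Fin n,
      (∫ ω, P t ω ∂μ) ≤ pwWeight d₀ σ univ
        (fun kb : Fin q × Bool => cond kb.2 (t kb.1).1 (t kb.1).2) := by
    intro t
    set s : Fin q × Bool → Fin n := fun kb => cond kb.2 (t kb.1).1 (t kb.1).2 with hs
    have hs1 : ∀ k : Fin q, s (k, true) = (t k).1 := fun k => rfl
    have hs2 : ∀ k : Fin q, s (k, false) = (t k).2 := fun k => rfl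
    set s₀ : Finset (Fin n) := Finset.image s univ with hs₀
    have hs₀card : s₀.card ≤ p := by
      rw [hs₀]
      refine le_trans (Finset.card_image_le) ?_
      rw [Finset.card_univ, hcardκ]
    have hmem : ∀ kb : Fin q × Bool, s kb ∈ s₀ := fun kb => by
      rw [hs₀]; exact Finset.mem_image_of_mem s (Finset.mem_univ kb)
    have hcnt1 : ∀ i ∈ s₀, 1 ≤ pwCnt univ s i := by
      intro i hi
      rw [hs₀] at hi
      obtain ⟨kb, -, rfl⟩ := Finset.mem_image.1 hi
      have hkb : kb ∈ (univ : Finset (Fin q × Bool)).filter (fun k' => s k' = s kb) :=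
        Finset.mem_filter.2 ⟨Finset.mem_univ _, rfl⟩
      exact Finset.card_pos.2 ⟨kb, hkb⟩
    have hsplitnorm : ∀ ω, (∏ kb : Fin q × Bool, ‖Y (s kb) ω‖)
        = ∏ k : Fin q, (‖Y (t k).1 ω‖ * ‖Y (t k).2 ω‖) := by
      intro ω
      rw [Fintype.prod_prod_type]
      refine Finset.prod_congr rfl fun k _ => ?_
      rw [Fintype.prod_bool, hs1, hs2]
    have hfib : ∀ f : Fin n → ℝ, (∏ kb : Fin q × Bool, f (s kb))
        = ∏ i ∈ s₀, f i ^ pwCnt univ s i := by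
      intro f
      rw [← Finset.prod_fiberwise_of_maps_to (fun kb _ => hmem kb) (fun kb => f (s kb))]
      refine Finset.prod_congr rfl fun i hi => ?_
      unfold pwCnt
      rw [← Finset.prod_const]
      exact Finset.prod_congr rfl fun kb hkb => by rw [(Finset.mem_filter.1 hkb).2]
    by_cases hgood : ∀ kb : Fin q × Bool, 2 ≤ pwCnt univ s (s kb)
    · -- good case
      have hcond : (∀ k, k ∉ (univ : Finset (Fin q × Bool)) → s k = d₀) ∧
          (∀ k ∈ (univ : Finset (Fin q × Bool)), 2 ≤ pwCnt univ s (s k)) :=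
        ⟨fun k hk => absurd (Finset.mem_univ k) hk, fun k _ => hgood k⟩
      have hw : pwWeight d₀ σ univ s
          = ∏ kb : Fin q × Bool, (σ (s kb) * (pwCnt univ s (s kb) : ℝ)) := by
        unfold pwWeight
        rw [if_pos hcond]
      have hprodmeas : Measurable (fun ω => ∏ kb : Fin q × Bool, ‖Y (s kb) ω‖) :=
        Finset.measurable_prod univ fun kb _ => (hYmeas _).norm
      have hprodint : Integrable (fun ω => ∏ kb : Fin q × Bool, ‖Y (s kb) ω‖) μ := by
        refine hdom _ hprodmeas (fun ω => ?_)
        rw [abs_of_nonneg (Finset.prod_nonneg fun kb _ => norm_nonneg _)]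
        exact hnormG s ω
      have hfibint : Integrable (fun ω => ∏ i ∈ s₀, ‖Y i ω‖ ^ pwCnt univ s i) μ := by
        refine hdom _ (Finset.measurable_prod s₀ fun i _ => (hYmeas i).norm.pow_const _)
          (fun ω => ?_)
        rw [abs_of_nonneg (Finset.prod_nonneg fun i _ => by positivity),
          ← hfib (fun i => ‖Y i ω‖)]
        exact hnormG s ω
      calc (∫ ω, P t ω ∂μ) ≤ ∫ ω, ∏ kb : Fin q × Bool, ‖Y (s kb) ω‖ ∂μ := by
            refine integral_mono (hPint t) hprodint (fun ω => ?_)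
            exact le_trans (le_abs_self _) (hPabs t ω)
      _ = ∫ ω, ∏ i ∈ s₀, ‖Y i ω‖ ^ pwCnt univ s i ∂μ :=
            integral_congr_ae (Filter.Eventually.of_forall fun ω => hfib (fun i => ‖Y i ω‖))
      _ = ∏ i ∈ s₀, ∫ ω, ‖Y i ω‖ ^ pwCnt univ s i ∂μ := by
            have h := integral_prod_of_indep (μ := μ) hmeas (hindep s₀ hs₀card)
              (fun i v => ‖v - ∫ x, X i x ∂μ‖ ^ pwCnt univ s i)
              (fun i => ((measurable_id.sub_const _).norm).pow_const _)
            simpa only [hYdef] using h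
      _ ≤ ∏ i ∈ s₀, (σ i * (pwCnt univ s i : ℝ)) ^ pwCnt univ s i := by
            refine Finset.prod_le_prod (fun i _ => integral_nonneg fun ω => by positivity)
              (fun i hi => ?_)
            rw [mul_pow]
            exact hYsub i _ (hcnt1 i hi)
      _ = pwWeight d₀ σ univ s := by
            rw [hw, hfib (fun i => σ i * (pwCnt univ s i : ℝ))]
    · -- bad case : some index appears exactly once
      push_neg at hgood
      obtain ⟨kb₀, hkb₀⟩ := hgood
      have h1 : 1 ≤ pwCnt univ s (s kb₀) := hcnt1 _ (hmem kb₀)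
      have hc1 : pwCnt univ s (s kb₀) = 1 := by omega
      have hwzero : pwWeight d₀ σ univ s = 0 := by
        unfold pwWeight
        rw [if_neg]
        rintro ⟨-, h2⟩
        have := h2 kb₀ (Finset.mem_univ _)
        omega
      rw [hwzero]
      have hsingle : (univ : Finset (Fin q × Bool)).filter (fun k' => s k' = s kb₀) = {kb₀} := by
        have hmemf : kb₀ ∈ (univ : Finset (Fin q × Bool)).filter (fun k' => s k' = s kb₀) :=
          Finset.mem_filter.2 ⟨Finset.mem_univ _, rfl⟩
        refine Finset.eq_singleton_iff_unique_mem.2 ⟨hmemf, fun x hx => ?_⟩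
        exact Finset.card_le_one.1 (le_of_eq hc1) x hx kb₀ hmemf
      have hPcoord : ∀ ω, P t ω = ∑ c : Fin q → Fin d,
          ∏ k : Fin q, (Y (t k).1 ω (c k) * Y (t k).2 ω (c k)) := by
        intro ω
        rw [hPdef]
        have hinner : ∀ k : Fin q, (⟪Y (t k).1 ω, Y (t k).2 ω⟫ : ℝ)
            = ∑ j : Fin d, (Y (t k).1 ω j * Y (t k).2 ω j) := by
          intro k
          rw [PiLp.inner_apply]
          exact Finset.sum_congr rfl fun j _ => by
            simp [RCLike.inner_apply, conj_trivial, mul_comm]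
        rw [Finset.prod_congr rfl fun k _ => hinner k, Finset.prod_univ_sum,
          Fintype.piFinset_univ]
      have hcoordtermabs : ∀ (c : Fin q → Fin d) (ω : Ω),
          |∏ k : Fin q, (Y (t k).1 ω (c k) * Y (t k).2 ω (c k))| ≤ G ω := by
        intro c ω
        rw [Finset.abs_prod]
        refine le_trans ?_ (le_trans (le_of_eq (hsplitnorm ω).symm) (hnormG s ω))
        refine Finset.prod_le_prod (fun k _ => abs_nonneg _) (fun k _ => ?_)
        rw [abs_mul]
        exact mul_le_mul (habs _ _) (habs _ _) (abs_nonneg _) (norm_nonneg _)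
      have hcoordint : ∀ c : Fin q → Fin d,
          Integrable (fun ω => ∏ k : Fin q, (Y (t k).1 ω (c k) * Y (t k).2 ω (c k))) μ := by
        intro c
        refine hdom _ ?_ (hcoordtermabs c)
        exact Finset.measurable_prod univ fun k _ => (hcoordmeas _ _).mul (hcoordmeas _ _)
      have hzero : ∀ c : Fin q → Fin d,
          ∫ ω, ∏ k : Fin q, (Y (t k).1 ω (c k) * Y (t k).2 ω (c k)) ∂μ = 0 := by
        intro c
        have hfact := integral_prod_of_indep (μ := μ) hmeas (hindep s₀ hs₀card)
          (fun i v => ∏ kb ∈ (univ : Finset (Fin q × Bool)).filter (fun k' => s k' = i),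
            (v - ∫ x, X i x ∂μ) (c kb.1))
          (fun i => Finset.measurable_prod _ fun kb _ =>
            ((EuclideanSpace.proj (c kb.1) (𝕜 := ℝ)).measurable).comp (measurable_id.sub_const _))
        have hid : ∀ ω, (∏ i ∈ s₀, ∏ kb ∈ (univ : Finset (Fin q × Bool)).filter
              (fun k' => s k' = i), (X i ω - ∫ x, X i x ∂μ) (c kb.1))
            = ∏ k : Fin q, (Y (t k).1 ω (c k) * Y (t k).2 ω (c k)) := by
          intro ω
          have e1 : (∏ i ∈ s₀, ∏ kb ∈ (univ : Finset (Fin q × Bool)).filter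
              (fun k' => s k' = i), (X i ω - ∫ x, X i x ∂μ) (c kb.1))
              = ∏ kb : Fin q × Bool, Y (s kb) ω (c kb.1) := by
            rw [← Finset.prod_fiberwise_of_maps_to (fun kb _ => hmem kb)
              (fun kb => Y (s kb) ω (c kb.1))]
            refine Finset.prod_congr rfl fun i hi => Finset.prod_congr rfl fun kb hkb => ?_
            rw [hYdef i ω, (Finset.mem_filter.1 hkb).2]
          rw [e1, Fintype.prod_prod_type]
          refine Finset.prod_congr rfl fun k _ => ?_
          rw [Fintype.prod_bool, hs1, hs2]
        have hzfac : (∫ ω, ∏ kb ∈ (univ : Finset (Fin q × Bool)).filter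
            (fun k' => s k' = s kb₀), (X (s kb₀) ω - ∫ x, X (s kb₀) x ∂μ) (c kb.1) ∂μ) = 0 := by
          rw [hsingle]
          simp only [Finset.prod_singleton]
          simpa only [hYdef] using hcoordzero (s kb₀) (c kb₀.1)
        calc ∫ ω, ∏ k : Fin q, (Y (t k).1 ω (c k) * Y (t k).2 ω (c k)) ∂μ
            = ∫ ω, ∏ i ∈ s₀, ∏ kb ∈ (univ : Finset (Fin q × Bool)).filter
                (fun k' => s k' = i), (X i ω - ∫ x, X i x ∂μ) (c kb.1) ∂μ :=
              integral_congr_ae (Filter.Eventually.of_forall fun ω => (hid ω).symm)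
        _ = ∏ i ∈ s₀, ∫ ω, ∏ kb ∈ (univ : Finset (Fin q × Bool)).filter
                (fun k' => s k' = i), (X i ω - ∫ x, X i x ∂μ) (c kb.1) ∂μ := hfact
        _ = 0 := Finset.prod_eq_zero (hmem kb₀) hzfac
      have hPzero : ∫ ω, P t ω ∂μ = 0 := by
        calc ∫ ω, P t ω ∂μ = ∫ ω, ∑ c : Fin q → Fin d,
              ∏ k : Fin q, (Y (t k).1 ω (c k) * Y (t k).2 ω (c k)) ∂μ :=
            integral_congr_ae (Filter.Eventually.of_forall fun ω => hPcoord ω)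
        _ = ∑ c : Fin q → Fin d, ∫ ω,
              ∏ k : Fin q, (Y (t k).1 ω (c k) * Y (t k).2 ω (c k)) ∂μ :=
            integral_finset_sum univ (fun c _ => hcoordint c)
        _ = 0 := Finset.sum_eq_zero fun c _ => hzero c
      exact le_of_eq hPzero
  -- reindex
  have hbij : Function.Bijective (fun (t : Fin q → Fin n × Fin n)
      (kb : Fin q × Bool) => cond kb.2 (t kb.1).1 (t kb.1).2) := by
    rw [Function.bijective_iff_has_inverse]
    refine ⟨fun s k => (s (k, true), s (k, false)), fun t => ?_, fun s => ?_⟩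
    · funext k
      simp
    · funext kb
      rcases kb with ⟨k, b⟩
      cases b <;> simp
  have hreindex : ∑ t : Fin q → Fin n × Fin n, pwWeight d₀ σ univ
        (fun kb : Fin q × Bool => cond kb.2 (t kb.1).1 (t kb.1).2)
      = ∑ s : Fin q × Bool → Fin n, pwWeight d₀ σ univ s :=
    Fintype.sum_bijective _ hbij _ _ (fun t => rfl)
  -- main chain
  have hptw : ∀ ω, (∑ i, X i ω) - ∫ x, ∑ i, X i x ∂μ = ∑ i, Y i ω := by
    intro ω
    rw [integral_finset_sum univ (fun i _ => hXint i), ← Finset.sum_sub_distrib]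
  calc (∫ ω, ‖(∑ i, X i ω) - ∫ x, ∑ i, X i x ∂μ‖ ^ p ∂μ)
      = ∫ ω, ∑ t : Fin q → Fin n × Fin n, P t ω ∂μ := by
        refine integral_congr_ae (Filter.Eventually.of_forall fun ω => ?_)
        dsimp only
        rw [hptw ω, hexp ω]
  _ = ∑ t : Fin q → Fin n × Fin n, ∫ ω, P t ω ∂μ :=
        integral_finset_sum univ (fun t _ => hPint t)
  _ ≤ ∑ t : Fin q → Fin n × Fin n, pwWeight d₀ σ univ
        (fun kb : Fin q × Bool => cond kb.2 (t kb.1).1 (t kb.1).2) :=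
        Finset.sum_le_sum fun t _ => hterm t
  _ = ∑ s : Fin q × Bool → Fin n, pwWeight d₀ σ univ s := hreindex
  _ ≤ (2 * Real.exp 1 * σt) ^ (univ : Finset (Fin q × Bool)).card *
        ((univ : Finset (Fin q × Bool)).card : ℝ) ^ (univ : Finset (Fin q × Bool)).card :=
        pwSum_le d₀ σ hσ σt hσt0 hsum univ
  _ ≤ (3 * σt) ^ p * (2 * (p : ℝ)) ^ p := by
        rw [Finset.card_univ, hcardκ]
        have he3 : Real.exp 1 ≤ 3 := le_of_lt (lt_trans Real.exp_one_lt_d9 (by norm_num))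
        have hppos : (0 : ℝ) ≤ (p : ℝ) := Nat.cast_nonneg _
        calc (2 * Real.exp 1 * σt) ^ p * (p : ℝ) ^ p = (2 * Real.exp 1 * σt * p) ^ p := by
              rw [← mul_pow]
        _ ≤ (3 * σt * (2 * (p : ℝ))) ^ p := by
              refine pow_le_pow_left₀ (by positivity) ?_ p
              nlinarith [mul_nonneg (sub_nonneg.2 he3) (mul_nonneg hσt0 hppos)]
        _ = (3 * σt) ^ p * (2 * (p : ℝ)) ^ p := by rw [mul_pow]
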